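/- Let T > 0 and let v_n : [0,T] → (0,∞) (n ∈ ℕ) be measurable functions such that v_n and log v_n are integrable on [0,T]. Let v, f ∈ L¹([0,T]), and suppose v_n converges to v weakly in L¹([0,T]) and log v_n converges to f weakly in L¹([0,T]) (that is, ∫₀^T v_n g → ∫₀^T v g and ∫₀^T (log v_n) g → ∫₀^T f g for every bounded measurable g : [0,T] → ℝ). Then f(t) ≤ log v(t) for a.e. t ∈ [0,T] (in particular v(t) > 0 for a.e. t ∈ [0,T]). -/

import Mathlib

open MeasureTheory Filter

lemma pointwise_aux {a b : ℝ}
    (h : ∀ q : ℚ, 0 < q → a ≤ Real.log (q:ℝ) + (b - q)/q) :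
    a ≤ Real.log b ∧ 0 < b := by
  have hb : 0 < b := by
    by_contra hb
    push_neg at hb
    obtain ⟨q, hq0, hq1⟩ := exists_rat_btwn (show (0:ℝ) < Real.exp (a+1) from Real.exp_pos _)
    have hq0' : 0 < q := by exact_mod_cast hq0
    have h1 := h q hq0'
    have h2 : Real.log q < a + 1 := by
      calc Real.log q < Real.log (Real.exp (a+1)) := Real.log_lt_log hq0 hq1
      _ = a + 1 := Real.log_exp _
    have h3 : (b - q)/q ≤ -1 := by
      rw [sub_div, div_self (ne_of_gt hq0)]
      have : b / (q:ℝ) ≤ 0 := div_nonpos_of_nonpos_of_nonneg hb (le_of_lt hq0)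
      linarith
    linarith
  refine ⟨?_, hb⟩
  by_contra hab
  push_neg at hab
  have hcont : ContinuousAt (fun c : ℝ => Real.log c + (b - c)/c) b := by
    have h1 : ContinuousAt Real.log b := Real.continuousAt_log (ne_of_gt hb)
    have h2 : ContinuousAt (fun c : ℝ => (b - c)/c) b :=
      ContinuousAt.div (by fun_prop) continuousAt_id (ne_of_gt hb)
    exact h1.add h2
  have hval : (fun c : ℝ => Real.log c + (b - c)/c) b = Real.log b := by
    simp
  have hev : ∀ᶠ c in nhds b, (Real.log c + (b - c)/c) < a := by
    have := hcont.eventually_mem (Iio_mem_nhds (show (fun c : ℝ => Real.log c + (b - c)/c) b < a by rw [hval]; exact hab))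
    simpa using this
  have hev2 : ∀ᶠ c in nhds b, (0:ℝ) < c := eventually_gt_nhds hb
  obtain ⟨δ, hδ, hball⟩ := Metric.eventually_nhds_iff.1 (hev.and hev2)
  obtain ⟨q, hq1, hq2⟩ := exists_rat_btwn (show b - δ < b by linarith)
  have hqb : dist (q:ℝ) b < δ := by
    rw [Real.dist_eq, abs_sub_lt_iff]; constructor <;> linarith
  obtain ⟨hqa, hqpos⟩ := hball hqb
  exact absurd (h q (by exact_mod_cast hqpos)) (not_le.2 hqa)


lemma key_aux
    (T : ℝ) (v : ℕ → ℝ → ℝ) (vl f : ℝ → ℝ)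
    (hvpos : ∀ n : ℕ, ∀ t ∈ Set.Icc (0:ℝ) T, 0 < v n t)
    (hvint : ∀ n : ℕ, IntegrableOn (v n) (Set.Icc 0 T))
    (hlogint : ∀ n : ℕ, IntegrableOn (fun t => Real.log (v n t)) (Set.Icc 0 T))
    (hvlint : IntegrableOn vl (Set.Icc 0 T))
    (hfint : IntegrableOn f (Set.Icc 0 T))
    (hweakv : ∀ g : ℝ → ℝ, Measurable g →
      (∃ C : ℝ, ∀ t ∈ Set.Icc (0:ℝ) T, |g t| ≤ C) →
      Tendsto (fun n => ∫ t in Set.Icc (0:ℝ) T, v n t * g t) atTop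
        (nhds (∫ t in Set.Icc (0:ℝ) T, vl t * g t)))
    (hweaklog : ∀ g : ℝ → ℝ, Measurable g →
      (∃ C : ℝ, ∀ t ∈ Set.Icc (0:ℝ) T, |g t| ≤ C) →
      Tendsto (fun n => ∫ t in Set.Icc (0:ℝ) T, Real.log (v n t) * g t) atTop
        (nhds (∫ t in Set.Icc (0:ℝ) T, f t * g t)))
    (c : ℝ) (hc : 0 < c) :
    ∀ᵐ t ∂(volume.restrict (Set.Icc (0:ℝ) T)),
      f t ≤ Real.log c + (vl t - c)/c := by
  have hfinmeas : IsFiniteMeasure (volume.restrict (Set.Icc (0:ℝ) T)) :=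
    ⟨by rw [Measure.restrict_apply_univ]; exact measure_Icc_lt_top⟩
  set h : ℝ → ℝ := fun t => (Real.log c - 1) + vl t / c - f t with hh
  have hint : Integrable h (volume.restrict (Set.Icc (0:ℝ) T)) :=
    ((integrable_const _).add (hvlint.div_const c)).sub hfint
  have main : ∀ s : Set ℝ, MeasurableSet s →
      0 ≤ ∫ t in s, h t ∂(volume.restrict (Set.Icc (0:ℝ) T)) := by
    intro s hs
    set g : ℝ → ℝ := s.indicator (fun _ => (1:ℝ)) with hg
    have hgm : Measurable g := measurable_const.indicator hs
    have hgb : ∃ C : ℝ, ∀ t ∈ Set.Icc (0:ℝ) T, |g t| ≤ C :=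
      ⟨1, fun t _ => by by_cases ht : t ∈ s <;> simp [hg, ht]⟩
    have hgnn : ∀ t, 0 ≤ g t := fun t =>
      Set.indicator_nonneg (fun _ _ => zero_le_one) t
    have hprod : ∀ φ : ℝ → ℝ, IntegrableOn φ (Set.Icc 0 T) →
        Integrable (fun t => φ t * g t) (volume.restrict (Set.Icc (0:ℝ) T)) := by
      intro φ hφ
      refine (hφ.indicator hs).congr (Eventually.of_forall fun t => ?_)
      by_cases ht : t ∈ s <;> simp [hg, ht]
    have hgint : Integrable g (volume.restrict (Set.Icc (0:ℝ) T)) :=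
      (integrable_const (1:ℝ)).indicator hs
    have hA := hweaklog g hgm hgb
    have hB := hweakv g hgm hgb
    -- splitting identity, for any integrable pair
    have split : ∀ φ ψ : ℝ → ℝ, IntegrableOn φ (Set.Icc 0 T) →
        IntegrableOn ψ (Set.Icc 0 T) →
        ∫ t in Set.Icc (0:ℝ) T,
            ((Real.log c - 1) * g t + (1/c) * (φ t * g t) - ψ t * g t)
          = (Real.log c - 1) * (∫ t in Set.Icc (0:ℝ) T, g t)
            + (1/c) * (∫ t in Set.Icc (0:ℝ) T, φ t * g t)
            - ∫ t in Set.Icc (0:ℝ) T, ψ t * g t := by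
      intro φ ψ hφ hψ
      have hi1 : Integrable (fun t => (Real.log c - 1) * g t)
          (volume.restrict (Set.Icc (0:ℝ) T)) := hgint.const_mul _
      have hi2 : Integrable (fun t => (1/c) * (φ t * g t))
          (volume.restrict (Set.Icc (0:ℝ) T)) := (hprod φ hφ).const_mul _
      have hi12 : Integrable (fun t => (Real.log c - 1) * g t + (1/c) * (φ t * g t))
          (volume.restrict (Set.Icc (0:ℝ) T)) := hi1.add hi2
      rw [integral_sub hi12 (hprod ψ hψ), integral_add hi1 hi2,
        integral_const_mul, integral_const_mul]
    have step : ∀ n : ℕ,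
        0 ≤ (Real.log c - 1) * (∫ t in Set.Icc (0:ℝ) T, g t)
            + (1/c) * (∫ t in Set.Icc (0:ℝ) T, v n t * g t)
            - ∫ t in Set.Icc (0:ℝ) T, Real.log (v n t) * g t := by
      intro n
      rw [← split (v n) (fun t => Real.log (v n t)) (hvint n) (hlogint n)]
      refine integral_nonneg_of_ae ?_
      filter_upwards [ae_restrict_mem measurableSet_Icc] with t ht
      have hv := hvpos n t ht
      have h1 := Real.log_le_sub_one_of_pos (div_pos hv hc)
      rw [Real.log_div (ne_of_gt hv) (ne_of_gt hc)] at h1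
      have h2 : (Real.log c - 1) * g t + (1/c) * (v n t * g t)
          - Real.log (v n t) * g t
          = ((Real.log c - 1) + v n t / c - Real.log (v n t)) * g t := by
        field_simp
      rw [h2]
      exact mul_nonneg (by linarith) (hgnn t)
    have hlim : Tendsto (fun n =>
        (Real.log c - 1) * (∫ t in Set.Icc (0:ℝ) T, g t)
        + (1/c) * (∫ t in Set.Icc (0:ℝ) T, v n t * g t)
        - ∫ t in Set.Icc (0:ℝ) T, Real.log (v n t) * g t) atTop
        (nhds ((Real.log c - 1) * (∫ t in Set.Icc (0:ℝ) T, g t)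
        + (1/c) * (∫ t in Set.Icc (0:ℝ) T, vl t * g t)
        - ∫ t in Set.Icc (0:ℝ) T, f t * g t)) :=
      (tendsto_const_nhds.add (hB.const_mul _)).sub hA
    have final : 0 ≤ (Real.log c - 1) * (∫ t in Set.Icc (0:ℝ) T, g t)
        + (1/c) * (∫ t in Set.Icc (0:ℝ) T, vl t * g t)
        - ∫ t in Set.Icc (0:ℝ) T, f t * g t := ge_of_tendsto' hlim step
    rw [← split vl f hvlint hfint] at final
    have e1 : ∫ t in Set.Icc (0:ℝ) T,
        ((Real.log c - 1) * g t + (1/c) * (vl t * g t) - f t * g t)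
        = ∫ t in Set.Icc (0:ℝ) T, s.indicator h t := by
      refine integral_congr_ae (Eventually.of_forall fun t => ?_)
      by_cases ht : t ∈ s <;> simp [hg, hh, ht] <;> ring
    rw [e1, setIntegral_indicator hs] at final
    rwa [Measure.restrict_restrict hs, Set.inter_comm]
  have := ae_nonneg_of_forall_setIntegral_nonneg hint (fun s hs _ => main s hs)
  filter_upwards [this] with t ht
  have ht' : 0 ≤ h t := ht
  rw [sub_div, div_self (ne_of_gt hc)]
  simp only [hh] at ht'
  linarith

/-- If positive functions `v_n` converge weakly in `L¹([0,T])` to `v` and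
`log v_n` converge weakly in `L¹([0,T])` to `f`, then `f ≤ log v` a.e.
(in particular `v > 0` a.e.). -/
theorem weak_limit_log_inequality
    (T : ℝ) (hT : 0 < T) (v : ℕ → ℝ → ℝ) (vl f : ℝ → ℝ)
    (hvm : ∀ n : ℕ, Measurable (v n))
    (hvpos : ∀ n : ℕ, ∀ t ∈ Set.Icc (0:ℝ) T, 0 < v n t)
    (hvint : ∀ n : ℕ, IntegrableOn (v n) (Set.Icc 0 T))
    (hlogint : ∀ n : ℕ, IntegrableOn (fun t => Real.log (v n t)) (Set.Icc 0 T))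
    (hvlint : IntegrableOn vl (Set.Icc 0 T))
    (hfint : IntegrableOn f (Set.Icc 0 T))
    (hweakv : ∀ g : ℝ → ℝ, Measurable g →
      (∃ C : ℝ, ∀ t ∈ Set.Icc (0:ℝ) T, |g t| ≤ C) →
      Tendsto (fun n => ∫ t in Set.Icc (0:ℝ) T, v n t * g t) atTop
        (nhds (∫ t in Set.Icc (0:ℝ) T, vl t * g t)))
    (hweaklog : ∀ g : ℝ → ℝ, Measurable g →
      (∃ C : ℝ, ∀ t ∈ Set.Icc (0:ℝ) T, |g t| ≤ C) →
      Tendsto (fun n => ∫ t in Set.Icc (0:ℝ) T, Real.log (v n t) * g t) atTop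
        (nhds (∫ t in Set.Icc (0:ℝ) T, f t * g t))) :
    ∀ᵐ t ∂(volume.restrict (Set.Icc (0:ℝ) T)), f t ≤ Real.log (vl t) ∧ 0 < vl t := by
  have hq : ∀ᵐ t ∂(volume.restrict (Set.Icc (0:ℝ) T)),
      ∀ q : ℚ, 0 < q → f t ≤ Real.log (q:ℝ) + (vl t - q)/q := by
    rw [ae_all_iff]
    intro q
    by_cases hq : 0 < q
    · have := key_aux T v vl f hvpos hvint hlogint hvlint hfint hweakv hweaklog
        (q:ℝ) (by exact_mod_cast hq)
      filter_upwards [this] with t ht _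
      exact ht
    · filter_upwards with t hq'
      exact absurd hq' hq
  filter_upwards [hq] with t ht
  have := pointwise_aux (a := f t) (b := vl t) ht
  exact ⟨this.1, this.2⟩
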